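/- Let a countable group Γ act continuously on a compact metrizable space X with the weak specification property, witnessed for a given ε > 0 by a symmetric finite set F containing the identity. Let x₁, …, x_k ∈ X and let D_i = {x ∈ X : ρ(x, x_i) ≤ ε}. Then the tuple (D₁, …, D_k) has independence density at least 1/|F|. -/

import Mathlib

open Filter Topology MeasureTheory
open scoped symmDiff

namespace GOE

/-- The action of `Γ` on `X` is continuous (each group element acts continuously). -/
def ContAction (Γ X : Type*) [Group Γ] [TopologicalSpace X] [MulAction Γ X] : Prop :=
  ∀ s : Γ, Continuous fun x : X => s • x

/-- The weak specification property with respect to the metric on `X`. -/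
def WeakSpec (Γ X : Type*) [Group Γ] [MetricSpace X] [MulAction Γ X] : Prop :=
  ∀ ε : ℝ, 0 < ε → ∃ F : Finset Γ, F.Nonempty ∧ (∀ s ∈ F, s⁻¹ ∈ F) ∧
    ∀ (J : Type) (_ : Fintype J) (Fj : J → Finset Γ),
      (∀ i j : J, i ≠ j → ∀ f ∈ F, ∀ s ∈ Fj i, f * s ∉ Fj j) →
      ∀ xj : J → X, ∃ x : X, ∀ j : J, ∀ s ∈ Fj j, dist (s • x) (s • xj j) ≤ ε

/-- Expansiveness of the action with respect to the metric on `X`. -/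
def Expansive (Γ X : Type*) [Group Γ] [MetricSpace X] [MulAction Γ X] : Prop :=
  ∃ κ : ℝ, 0 < κ ∧ ∀ x y : X, x ≠ y → ∃ s : Γ, κ < dist (s • x) (s • y)

/-- `(x, y)` is a homoclinic pair: `dist (s • x) (s • y) → 0` as `s → ∞` in `Γ`. -/
def Homoclinic (Γ : Type*) {X : Type*} [Group Γ] [MetricSpace X] [MulAction Γ X]
    (x y : X) : Prop :=
  ∀ ε : ℝ, 0 < ε → ∃ E : Finset Γ, ∀ s : Γ, s ∉ E → dist (s • x) (s • y) < ε

/-- `T` is pre-injective: injective on each homoclinic equivalence class. -/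
def PreInjective (Γ : Type*) {X Y : Type*} [Group Γ] [MetricSpace X] [MulAction Γ X]
    (T : X → Y) : Prop :=
  ∀ x y : X, Homoclinic Γ x y → T x = T y → x = y

/-- `F` is a left Følner sequence for `Γ`. -/
def IsFolner (Γ : Type*) [Group Γ] (F : ℕ → Finset Γ) : Prop :=
  letI := Classical.decEq Γ
  (∀ n, (F n).Nonempty) ∧
  ∀ K : Finset Γ, K.Nonempty →
    Tendsto (fun n =>
        ((((K.biUnion fun k => (F n).image fun t => k * t) ∆ (F n)).card : ℝ) / (F n).card))
      atTop (𝓝 0)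

/-- The minimal number of members of the cover `⋁_{s ∈ E} s⁻¹ U` needed to cover `Z`. -/
noncomputable def covNumOn (Γ X : Type*) [Group Γ] [TopologicalSpace X] [MulAction Γ X]
    (Z : Set X) (U : Finset (Set X)) (E : Finset Γ) : ℕ :=
  sInf {n : ℕ | ∃ c : Finset (Γ → Set X), c.card = n ∧ (∀ f ∈ c, ∀ s : Γ, f s ∈ U) ∧
    Z ⊆ ⋃ f ∈ c, ⋂ s ∈ E, (fun x : X => s • x) ⁻¹' f s}

/-- Topological entropy of the restriction of the action to the invariant set `Z`,
computed along the Følner sequence `F` via open covers. -/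
noncomputable def topEntOn (Γ X : Type*) [Group Γ] [TopologicalSpace X] [MulAction Γ X]
    (Z : Set X) (F : ℕ → Finset Γ) : EReal :=
  ⨆ (U : Finset (Set X)) (_ : (∀ V ∈ U, IsOpen V) ∧ Z ⊆ ⋃₀ (↑U : Set (Set X))),
    Filter.limsup
      (fun n => ((Real.log (covNumOn Γ X Z U (F n)) / (F n).card : ℝ) : EReal)) Filter.atTop

/-- Maximal cardinality of a `(ρ_E, ε)`-separated subset of `Z`. -/
noncomputable def sepNum (Γ X : Type*) [Group Γ] [MetricSpace X] [MulAction Γ X]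
    (Z : Set X) (E : Finset Γ) (ε : ℝ) : ℕ :=
  sSup {n : ℕ | ∃ W : Finset X, (↑W : Set X) ⊆ Z ∧ W.card = n ∧
    ∀ x ∈ W, ∀ y ∈ W, x ≠ y → ∃ s ∈ E, ε ≤ dist (s • x) (s • y)}

/-- Minimal cardinality of a `(ρ_E, ε)`-spanning subset of `Z`. -/
noncomputable def spnNum (Γ X : Type*) [Group Γ] [MetricSpace X] [MulAction Γ X]
    (Z : Set X) (E : Finset Γ) (ε : ℝ) : ℕ :=
  sInf {n : ℕ | ∃ W : Finset X, (↑W : Set X) ⊆ Z ∧ W.card = n ∧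
    ∀ x ∈ Z, ∃ w ∈ W, ∀ s ∈ E, dist (s • x) (s • w) < ε}

/-- Shannon entropy of a finite family of Borel sets. -/
noncomputable def shannonH {X : Type*} [MeasurableSpace X] (μ : Measure X)
    (P : Finset (Set X)) : ℝ :=
  ∑ A ∈ P, -((μ A).toReal * Real.log (μ A).toReal)

/-- The join `⋁_{s ∈ E} s⁻¹ P` of the partition `P`. -/
noncomputable def joinPart (Γ X : Type*) [Group Γ] [MulAction Γ X]
    (P : Finset (Set X)) (E : Finset Γ) : Finset (Set X) :=
  letI := Classical.decEq Γ
  letI := Classical.decEq (Set X)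
  (E.pi fun _ => P).image fun f => ⋂ s, ⋂ (h : s ∈ E), (fun x : X => s • x) ⁻¹' f s h

/-- Dynamical entropy of the partition `P` along the Følner sequence `F`. -/
noncomputable def dynEnt (Γ X : Type*) [Group Γ] [MulAction Γ X] [MeasurableSpace X]
    (μ : Measure X) (P : Finset (Set X)) (F : ℕ → Finset Γ) : ℝ :=
  Filter.limsup (fun n => shannonH μ (joinPart Γ X P (F n)) / (F n).card) Filter.atTop

/-- `P` is a finite Borel partition of `X`. -/
def IsBorelPartition {X : Type*} [MeasurableSpace X] (P : Finset (Set X)) : Prop :=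
  (∀ A ∈ P, MeasurableSet A) ∧ (∀ A ∈ P, ∀ B ∈ P, A ≠ B → Disjoint A B) ∧
    ⋃₀ (↑P : Set (Set X)) = Set.univ

/-- Completely positive entropy of `Γ ↷ (X, μ)` along the Følner sequence `F`. -/
def HasCPE (Γ X : Type*) [Group Γ] [MulAction Γ X] [MeasurableSpace X]
    (μ : Measure X) (F : ℕ → Finset Γ) : Prop :=
  ∀ P : Finset (Set X), IsBorelPartition P → 0 < shannonH μ P → 0 < dynEnt Γ X μ P F

/-- `K'` is an independence set for the tuple `D` of subsets of `X`. -/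
def IsIndepSet (Γ X : Type*) [Group Γ] [MulAction Γ X] {k : ℕ}
    (D : Fin k → Set X) (K' : Finset Γ) : Prop :=
  ∀ ω : Γ → Fin k, ∃ x : X, ∀ s ∈ K', s • x ∈ D (ω s)

/-- The independence density of the tuple `D`. -/
noncomputable def indepDensity (Γ X : Type*) [Group Γ] [MulAction Γ X] {k : ℕ}
    (D : Fin k → Set X) : ℝ :=
  sInf {r : ℝ | ∃ K : Finset Γ, K.Nonempty ∧
    r = ((sSup {n : ℕ | ∃ K' ⊆ K, K'.card = n ∧ IsIndepSet Γ X D K'} : ℕ) : ℝ) / K.card}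

/-- The shift action `(s • x)_t = x_{s⁻¹ t}` on `Γ → A`. -/
def shiftAct {Γ A : Type*} [Group Γ] (s : Γ) (x : Γ → A) : Γ → A := fun t => x (s⁻¹ * t)

end GOE

open GOE


private lemma sep_lemma {Γ : Type*} [Group Γ] [DecidableEq Γ] (F : Finset Γ)
    (hFe : (1:Γ) ∈ F) (hFsymm : ∀ s ∈ F, s⁻¹ ∈ F) (K : Finset Γ) :
    ∃ K' ⊆ K, K.card ≤ F.card * K'.card ∧
      ∀ s ∈ K', ∀ t ∈ K', s ≠ t → ∀ f ∈ F, f * t ≠ s := by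
  induction K using Finset.strongInduction with
  | _ K ih =>
    rcases K.eq_empty_or_nonempty with rfl | ⟨a, ha⟩
    · exact ⟨∅, Finset.Subset.refl _, by simp, by simp⟩
    · set K₀ := K.filter (fun t => t ∉ F.image (· * a)) with hK₀
      have haim : a ∈ F.image (· * a) := Finset.mem_image.mpr ⟨1, hFe, one_mul a⟩
      have hsub : K₀ ⊂ K := Finset.filter_ssubset.mpr ⟨a, ha, not_not.mpr haim⟩
      obtain ⟨K', hK'sub, hcard, hsep⟩ := ih K₀ hsub
      have haK' : a ∉ K' := fun h => by
        have := hK'sub h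
        rw [hK₀, Finset.mem_filter] at this
        exact this.2 haim
      refine ⟨insert a K', ?_, ?_, ?_⟩
      · exact Finset.insert_subset ha (hK'sub.trans (Finset.filter_subset _ _))
      · have h1 : K ⊆ K₀ ∪ F.image (· * a) := by
          intro t ht
          by_cases h : t ∈ F.image (· * a)
          · exact Finset.mem_union_right _ h
          · exact Finset.mem_union_left _ (Finset.mem_filter.mpr ⟨ht, h⟩)
        have h2 : K.card ≤ K₀.card + F.card :=
          (Finset.card_le_card h1).trans
            ((Finset.card_union_le _ _).trans
              (Nat.add_le_add_left Finset.card_image_le _))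
        rw [Finset.card_insert_of_notMem haK', Nat.mul_add, Nat.mul_one]
        omega
      · intro s hs t ht hst f hf h
        rcases Finset.mem_insert.mp hs with hsa | hs' <;>
          rcases Finset.mem_insert.mp ht with hta | ht'
        · exact hst (hsa.trans hta.symm)
        · -- s = a, t ∈ K' : f * t = a impossible
          have ht0 : t ∉ F.image (· * a) := (Finset.mem_filter.mp (hK'sub ht')).2
          refine ht0 (Finset.mem_image.mpr ⟨f⁻¹, hFsymm f hf, ?_⟩)
          rw [← hsa, ← h]; group
        · -- t = a, s ∈ K' : f * a = s impossible
          have hs0 : s ∉ F.image (· * a) := (Finset.mem_filter.mp (hK'sub hs')).2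
          exact hs0 (Finset.mem_image.mpr ⟨f, hf, by rw [← hta, h]⟩)
        · exact hsep s hs' t ht' hst f hf h

/-- the tuple of closed `ε`-balls around `x₁, …, x_k` has
independence density at least `1/|F|`, where `F` witnesses weak specification
for `ε`. -/
theorem indepDensity_ge_of_weakSpec_witness {Γ X : Type*} [Group Γ] [Countable Γ]
    [MetricSpace X] [CompactSpace X] [MulAction Γ X]
    (hact : ContAction Γ X)
    (ε : ℝ) (hε : 0 < ε) (F : Finset Γ) (hFe : (1 : Γ) ∈ F) (hFsymm : ∀ s ∈ F, s⁻¹ ∈ F)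
    (hwit : ∀ (J : Type) (_ : Fintype J) (Fj : J → Finset Γ),
      (∀ i j : J, i ≠ j → ∀ f ∈ F, ∀ s ∈ Fj i, f * s ∉ Fj j) →
      ∀ yj : J → X, ∃ y : X, ∀ j : J, ∀ s ∈ Fj j, dist (s • y) (s • yj j) ≤ ε)
    (k : ℕ) (x : Fin k → X) :
    1 / (F.card : ℝ) ≤ indepDensity Γ X (fun i => {z : X | dist z (x i) ≤ ε}) := by
  classical
  have hFne : F.Nonempty := ⟨1, hFe⟩
  have hFpos : (0:ℝ) < F.card := by exact_mod_cast Finset.card_pos.mpr hFne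
  set D : Fin k → Set X := fun i => {z : X | dist z (x i) ≤ ε} with hD
  apply le_csInf
  · exact ⟨_, ⟨{1}, ⟨1, Finset.mem_singleton_self 1⟩, rfl⟩⟩
  · rintro r ⟨K, hKne, rfl⟩
    obtain ⟨K', hK'K, hcard, hsep⟩ := sep_lemma F hFe hFsymm K
    have hindep : IsIndepSet Γ X D K' := by
      intro ω
      set e : Fin K'.card ≃ {s // s ∈ K'} := K'.equivFin.symm with he
      have hcond : ∀ i j : Fin K'.card, i ≠ j → ∀ f ∈ F,
          ∀ s ∈ ({((e i : {s // s ∈ K'}) : Γ)} : Finset Γ),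
            f * s ∉ ({((e j : {s // s ∈ K'}) : Γ)} : Finset Γ) := by
        intro i j hij f hf s hsmem
        rw [Finset.mem_singleton] at hsmem ⊢
        subst hsmem
        exact hsep _ (e j).2 _ (e i).2
          (fun h => hij (e.injective (Subtype.ext h.symm))) f hf
      obtain ⟨y, hy⟩ := hwit (Fin K'.card) inferInstance
        (fun j => {((e j : {s // s ∈ K'}) : Γ)}) hcond
        (fun j => ((e j : {s // s ∈ K'}) : Γ)⁻¹ • x (ω ((e j : {s // s ∈ K'}) : Γ)))
      refine ⟨y, fun s hs => ?_⟩
      have := hy (e.symm ⟨s, hs⟩) _ (Finset.mem_singleton_self _)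
      rw [Equiv.apply_symm_apply] at this
      simpa [smul_inv_smul, hD] using this
    have hbdd : BddAbove {n : ℕ | ∃ K'' ⊆ K, K''.card = n ∧ IsIndepSet Γ X D K''} :=
      ⟨K.card, fun n ⟨K'', hsub, hc, _⟩ => hc ▸ Finset.card_le_card hsub⟩
    have hle : K'.card ≤ sSup {n : ℕ | ∃ K'' ⊆ K, K''.card = n ∧ IsIndepSet Γ X D K''} :=
      le_csSup hbdd ⟨K', hK'K, rfl, hindep⟩
    have hKpos : (0:ℝ) < K.card := by exact_mod_cast Finset.card_pos.mpr hKne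
    rw [div_le_div_iff₀ hFpos hKpos, one_mul]
    calc (K.card : ℝ) ≤ F.card * K'.card := by exact_mod_cast hcard
      _ ≤ F.card * (sSup {n : ℕ | ∃ K'' ⊆ K, K''.card = n ∧ IsIndepSet Γ X D K''}) := by
          exact mul_le_mul_of_nonneg_left (by exact_mod_cast hle) hFpos.le
      _ = _ := mul_comm _ _
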